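/- If (a, b, c) with a ≤ b ≤ c is the signature of a cubic girth-regular graph of finite girth, then a + b ≥ c. -/

import Mathlib

open SimpleGraph

/-- `s` is the edge set of some cycle of length `g` in `G`. -/
def IsGirthCycleEdgeSet {V : Type*} (G : SimpleGraph V) (g : ℕ) (s : Set (Sym2 V)) : Prop :=
  ∃ (u : V) (w : G.Walk u u), w.IsCycle ∧ w.length = g ∧ s = {e | e ∈ w.edges}

/-- The number of cycles of length `g` in `G` that contain the edge `e`. -/
noncomputable def girthCycleCount {V : Type*} (G : SimpleGraph V) (g : ℕ) (e : Sym2 V) : ℕ :=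
  Set.ncard {s : Set (Sym2 V) | IsGirthCycleEdgeSet G g s ∧ e ∈ s}

/-- The multiset of the numbers of `g`-cycles through the edges incident to `v`. -/
noncomputable def vertexSignature {V : Type*} [Fintype V] (G : SimpleGraph V) (g : ℕ)
    (v : V) : Multiset ℕ :=
  ((G.neighborSet v).toFinite.toFinset.val).map fun u => girthCycleCount G g s(v, u)

/-- Every non-nil walk ending at `v` has an edge incident to `v`. -/
lemma exists_last_edge {V : Type*} {G : SimpleGraph V} :
    ∀ {u v : V} (p : G.Walk u v), ¬ p.Nil → ∃ y, s(y, v) ∈ p.edges := by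
  intro u v p
  induction p with
  | nil => intro h; simp at h
  | @cons u w v h q ih =>
    intro _
    cases q with
    | nil => exact ⟨u, by simp⟩
    | cons h' q' =>
      obtain ⟨y, hy⟩ := ih (by simp)
      exact ⟨y, by rw [Walk.edges_cons]; exact List.mem_cons_of_mem _ hy⟩

/-- A cycle based at `v` has two distinct edges incident to `v`. -/
lemma cycle_two_edges_at_base {V : Type*} {G : SimpleGraph V} {v : V}
    (c : G.Walk v v) (hc : c.IsCycle) :
    ∃ x y, x ≠ y ∧ s(v, x) ∈ c.edges ∧ s(v, y) ∈ c.edges := by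
  cases c with
  | nil => exact absurd rfl hc.ne_nil
  | @cons _ b _ h p =>
    rw [Walk.cons_isCycle_iff] at hc
    obtain ⟨hp, hne⟩ := hc
    have hn : ¬ p.Nil := Walk.not_nil_of_ne h.ne.symm
    obtain ⟨y, hy⟩ := exists_last_edge p hn
    refine ⟨b, y, ?_, by simp, ?_⟩
    · rintro rfl
      exact hne (by rwa [Sym2.eq_swap])
    · rw [Walk.edges_cons]
      right
      rwa [Sym2.eq_swap]

/-- If a cycle contains the edge `s(v,u)`, it contains another edge `s(v,x)` with `x ≠ u`. -/
lemma cycle_other_edge {V : Type*} {G : SimpleGraph V} {t v u : V}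
    (w : G.Walk t t) (hw : w.IsCycle) (he : s(v, u) ∈ w.edges) :
    ∃ x, x ≠ u ∧ G.Adj v x ∧ s(v, x) ∈ w.edges := by
  classical
  have hv : v ∈ w.support := w.fst_mem_support_of_mem_edges he
  have hc : (w.rotate v hv).IsCycle := (w.isCycle_rotate hv).mpr hw
  have hmem : ∀ e, e ∈ (w.rotate v hv).edges ↔ e ∈ w.edges :=
    fun e => (w.rotate_edges v hv).mem_iff
  obtain ⟨x, y, hxy, hx, hy⟩ := cycle_two_edges_at_base (w.rotate v hv) hc
  rw [hmem] at hx hy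
  by_cases hxu : x = u
  · subst hxu
    exact ⟨y, fun hh => hxy hh.symm, w.adj_of_mem_edges hy, hy⟩
  · exact ⟨x, hxu, w.adj_of_mem_edges hx, hx⟩

/-- For a cubic girth-regular graph of finite girth with signature (a, b, c), we have a + b ≥ c. -/
theorem stmt6 {V : Type*} [Fintype V] (G : SimpleGraph V) [DecidableRel G.Adj]
    (g : ℕ) (hreg : G.IsRegularOfDegree 3) (hg : G.egirth = (g : ℕ∞))
    (a b c : ℕ) (hab : a ≤ b) (hbc : b ≤ c)
    (hsig : ∀ v : V, vertexSignature G g v = {a, b, c}) :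
    c ≤ a + b := by
  classical
  -- V is nonempty since there is a cycle
  have hac : ¬ G.IsAcyclic := by
    rw [← SimpleGraph.egirth_eq_top.not, hg]
    exact (WithTop.natCast_ne_top g)
  obtain ⟨v, -, -⟩ := SimpleGraph.exists_egirth_eq_length.mpr hac
  -- the vertex signature, rewritten over the neighbor finset
  have hfin : (G.neighborSet v).toFinite.toFinset = G.neighborFinset v := by
    ext x; simp
  have hsigv : (G.neighborFinset v).val.map (fun u => girthCycleCount G g s(v, u))
      = {a, b, c} := by
    rw [← hfin]; exact hsig v
  -- pick a neighbor u with count c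
  have hcmem : c ∈ (G.neighborFinset v).val.map (fun u => girthCycleCount G g s(v, u)) := by
    rw [hsigv]; simp
  obtain ⟨u, hu, hcu⟩ := Multiset.mem_map.mp hcmem
  have hu' : u ∈ G.neighborFinset v := hu
  -- the other two neighbors
  have hdeg : (G.neighborFinset v).card = 3 := hreg v
  have hcard2 : ((G.neighborFinset v).erase u).card = 2 := by
    rw [Finset.card_erase_of_mem hu', hdeg]
  obtain ⟨u₁, u₂, h12, hE⟩ := Finset.card_eq_two.mp hcard2
  -- counting: every girth cycle through s(v,u) passes through s(v,u₁) or s(v,u₂)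
  have hsub : {s : Set (Sym2 V) | IsGirthCycleEdgeSet G g s ∧ s(v, u) ∈ s} ⊆
      {s : Set (Sym2 V) | IsGirthCycleEdgeSet G g s ∧ s(v, u₁) ∈ s} ∪
      {s : Set (Sym2 V) | IsGirthCycleEdgeSet G g s ∧ s(v, u₂) ∈ s} := by
    rintro s ⟨⟨t, w, hcyc, hlen, rfl⟩, he⟩
    obtain ⟨x, hxu, hadj, hx⟩ := cycle_other_edge w hcyc he
    have hxE : x ∈ (G.neighborFinset v).erase u := by
      rw [Finset.mem_erase]
      exact ⟨hxu, by simpa using hadj⟩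
    rw [hE, Finset.mem_insert, Finset.mem_singleton] at hxE
    rcases hxE with rfl | rfl
    · exact Or.inl ⟨⟨t, w, hcyc, hlen, rfl⟩, hx⟩
    · exact Or.inr ⟨⟨t, w, hcyc, hlen, rfl⟩, hx⟩
  have hle : girthCycleCount G g s(v, u) ≤
      girthCycleCount G g s(v, u₁) + girthCycleCount G g s(v, u₂) := by
    calc girthCycleCount G g s(v, u)
        ≤ ({s : Set (Sym2 V) | IsGirthCycleEdgeSet G g s ∧ s(v, u₁) ∈ s} ∪
           {s : Set (Sym2 V) | IsGirthCycleEdgeSet G g s ∧ s(v, u₂) ∈ s}).ncard :=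
          Set.ncard_le_ncard hsub (Set.toFinite _)
      _ ≤ _ := Set.ncard_union_le _ _
  -- sum of the signature is a + b + c
  have hsum : ∑ x ∈ G.neighborFinset v, girthCycleCount G g s(v, x) = a + b + c := by
    rw [Finset.sum_eq_multiset_sum, hsigv]
    simp [Multiset.insert_eq_cons]
    omega
  have hins : G.neighborFinset v = insert u ((G.neighborFinset v).erase u) :=
    (Finset.insert_erase hu').symm
  have hsum2 : girthCycleCount G g s(v, u) +
      (girthCycleCount G g s(v, u₁) + girthCycleCount G g s(v, u₂)) = a + b + c := by
    rw [← hsum, hins, Finset.sum_insert (Finset.notMem_erase u _), hE,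
      Finset.sum_pair h12]
  omega
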